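/- The determinant of the matrix B_p(k) is a rational number; that is, there exists q ∈ ℚ such that det B_p(k) = q (as a complex number). -/

import Mathlib

open IntermediateField

/-- An element of a finite Galois extension of `ℚ` inside `ℂ` fixed by all automorphisms
is rational. -/
lemma fixed_is_rat {K : IntermediateField ℚ ℂ} [FiniteDimensional ℚ K] [IsGalois ℚ K]
    (x : K) (hx : ∀ σ : K ≃ₐ[ℚ] K, σ x = x) : ∃ q : ℚ, (q : ℂ) = (x : ℂ) := by
  have hb : x ∈ (⊥ : IntermediateField ℚ K) := by
    rw [← IsGalois.fixedField_fixingSubgroup (⊥ : IntermediateField ℚ K)]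
    exact fun g => hx g.1
  rw [IntermediateField.mem_bot] at hb
  obtain ⟨q, hq⟩ := hb
  refine ⟨q, ?_⟩
  rw [← hq]
  have h1 : ((algebraMap ℚ K q : K) : ℂ) = algebraMap ℚ ℂ q :=
    (IsScalarTower.algebraMap_apply ℚ K ℂ q).symm
  rw [h1, eq_ratCast]

/-- The generator of `ℚ⟮ζ⟯` is a primitive root when `ζ` is. -/
lemma gen_primitive (P : ℕ) {ζ : ℂ} (hζ : IsPrimitiveRoot ζ P) :
    IsPrimitiveRoot (AdjoinSimple.gen ℚ ζ) P := by
  apply IsPrimitiveRoot.of_map_of_injective (f := algebraMap ℚ⟮ζ⟯ ℂ)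
  · simpa using hζ
  · exact (algebraMap ℚ⟮ζ⟯ ℂ).injective

/-- `ℚ⟮ζ⟯` is a cyclotomic extension of `ℚ` for a primitive `P`-th root of unity `ζ ∈ ℂ`. -/
lemma cyclo_setup (P : ℕ) (hP : 2 ≤ P) {ζ : ℂ} (hζ : IsPrimitiveRoot ζ P) :
    IsCyclotomicExtension {P} ℚ ℚ⟮ζ⟯ := by
  haveI : NeZero P := ⟨by omega⟩
  have hint : IsIntegral ℚ ζ := (hζ.isIntegral (by omega)).tower_top
  have hζK : IsPrimitiveRoot (AdjoinSimple.gen ℚ ζ) P := gen_primitive P hζ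
  refine ⟨?_, ?_⟩
  · rintro n rfl _
    exact ⟨AdjoinSimple.gen ℚ ζ, hζK⟩
  · intro x
    have hts : (ℚ⟮ζ⟯).toSubalgebra = Algebra.adjoin ℚ {ζ} :=
      adjoin_simple_toSubalgebra_of_isAlgebraic hint.isAlgebraic
    have hx : (x : ℂ) ∈ Algebra.adjoin ℚ {ζ} := by
      rw [← hts]; exact x.2
    have hgen : x ∈ Algebra.adjoin ℚ ({AdjoinSimple.gen ℚ ζ} : Set ℚ⟮ζ⟯) := by
      have hmap : (Algebra.adjoin ℚ ({AdjoinSimple.gen ℚ ζ} : Set ℚ⟮ζ⟯)).map (ℚ⟮ζ⟯).val =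
          Algebra.adjoin ℚ {ζ} := by
        erw [AlgHom.map_adjoin]
        congr 1
        simp [Set.image_singleton]
      rw [← hmap] at hx
      obtain ⟨y, hy, hyx⟩ := hx
      have : y = x := Subtype.ext hyx
      rwa [← this]
    refine Algebra.adjoin_mono ?_ hgen
    rintro b rfl
    exact ⟨P, rfl, by omega, hζK.pow_eq_one⟩

/-- For an odd prime `p`, a divisor `k` of `p-1` with `1 ≤ k < p-1`,
`n = (p-1)/k`, and a generator `χ` of the group of multiplicative characters of `𝔽_p`,
the determinant of the `(n-1) × (n-1)` matrix `B_p(k) = [1/J_p(χ^{ki}, χ^{kj})]_{1 ≤ i,j ≤ n-1}`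
is a rational number. Here `J_p(A,B) = ∑_{x ∈ 𝔽_p} A(x) B(1-x)`. -/
theorem det_Bpk_rational (p : ℕ) [Fact p.Prime] (hp : Odd p)
    (k : ℕ) (hk1 : 1 ≤ k) (hk2 : k < p - 1) (hkd : k ∣ p - 1)
    (χ : MulChar (ZMod p) ℂ)
    (hχ : ∀ ψ : MulChar (ZMod p) ℂ, ∃ m : ℕ, ψ = χ ^ m) :
    ∃ q : ℚ, (q : ℂ) =
      Matrix.det (Matrix.of fun i j : Fin ((p - 1) / k - 1) =>
        (∑ x : ZMod p, (χ ^ (k * (i.1 + 1))) x * (χ ^ (k * (j.1 + 1))) (1 - x))⁻¹) := by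
  classical
  have hP2 : 2 ≤ p - 1 := by omega
  set n := (p - 1) / k with hn
  have hkn : k * n = p - 1 := Nat.mul_div_cancel' hkd
  have hn2 : 2 ≤ n := by
    rcases Nat.lt_or_ge n 2 with h | h
    · have h1 : k * n ≤ k * 1 := Nat.mul_le_mul_left k (by omega)
      rw [mul_one] at h1
      omega
    · exact h
  have hnd : n ∣ p - 1 := ⟨k, by rw [← hkn]; ring⟩
  haveI : NeZero (p - 1) := ⟨by omega⟩
  set ζ : ℂ := Complex.exp (2 * Real.pi * Complex.I / ((p - 1 : ℕ) : ℂ)) with hζdef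
  have hζ : IsPrimitiveRoot ζ (p - 1) := Complex.isPrimitiveRoot_exp (p - 1) (by omega)
  set N : ℕ+ := ⟨p - 1, by omega⟩ with hNdef
  haveI : IsCyclotomicExtension {p - 1} ℚ ℚ⟮ζ⟯ := cyclo_setup (p - 1) hP2 hζ
  haveI : FiniteDimensional ℚ ℚ⟮ζ⟯ :=
    IsCyclotomicExtension.finiteDimensional (S := {p - 1}) (K := ℚ) ℚ⟮ζ⟯
  haveI : IsGalois ℚ ℚ⟮ζ⟯ := IsCyclotomicExtension.isGalois (S := {p - 1}) (K := ℚ) (L := ℚ⟮ζ⟯)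
  -- χ^(p-1) = 1
  have hP1 : χ ^ (p - 1) = 1 := by
    apply MulChar.ext
    intro a
    rw [MulChar.pow_apply_coe, MulChar.one_apply_coe, ← map_pow,
      ZMod.pow_card_sub_one_eq_one (a.ne_zero), map_one]
  -- reduction of exponents mod n
  have hpow : ∀ a : ℕ, χ ^ (k * (a % n)) = χ ^ (k * a) := by
    intro a
    conv_rhs => rw [← Nat.div_add_mod a n]
    have h : k * (n * (a / n) + a % n) = (p - 1) * (a / n) + k * (a % n) := by
      rw [← hkn]; ring
    rw [h, pow_add, pow_mul χ (p - 1), hP1, one_pow, one_mul]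
  -- entries lie in ℚ⟮ζ⟯
  have hmem : ∀ (m : ℕ) (x : ZMod p), (χ ^ m) x ∈ ℚ⟮ζ⟯ := by
    intro m x
    rcases eq_or_ne x 0 with rfl | hx
    · rw [MulChar.map_nonunit _ (by simpa using not_isUnit_zero)]
      exact zero_mem _
    · have h1 : ((χ ^ m) x) ^ (p - 1) = 1 := by
        rw [← map_pow, ZMod.pow_card_sub_one_eq_one hx, map_one]
      obtain ⟨i, _, hi⟩ := hζ.eq_pow_of_pow_eq_one h1
      rw [← hi]
      exact pow_mem (mem_adjoin_simple_self ℚ ζ) i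
  -- the matrix over ℚ⟮ζ⟯
  set M : Matrix (Fin (n - 1)) (Fin (n - 1)) ℚ⟮ζ⟯ := Matrix.of fun i j =>
    (∑ x : ZMod p, (⟨(χ ^ (k * (i.1 + 1))) x, hmem _ _⟩ : ℚ⟮ζ⟯) *
      (⟨(χ ^ (k * (j.1 + 1))) (1 - x), hmem _ _⟩ : ℚ⟮ζ⟯))⁻¹ with hM
  -- Galois invariance of the determinant
  have hσdet : ∀ σ : ℚ⟮ζ⟯ ≃ₐ[ℚ] ℚ⟮ζ⟯, σ M.det = M.det := by
    intro σ
    have hζK : IsPrimitiveRoot (AdjoinSimple.gen ℚ ζ) (p - 1) := gen_primitive _ hζ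
    have hσζ : IsPrimitiveRoot (σ (AdjoinSimple.gen ℚ ζ)) (p - 1) :=
      hζK.map_of_injective σ.injective
    obtain ⟨t, htlt, ht⟩ := hζK.eq_pow_of_pow_eq_one hσζ.pow_eq_one
    have htc : t.Coprime (p - 1) := (hζK.pow_iff_coprime (by omega) t).mp (ht ▸ hσζ)
    have ht0 : t ≠ 0 := by
      rintro rfl
      rw [Nat.coprime_zero_left] at htc
      omega
    -- σ acts as t-th power on (p-1)-th roots of unity
    have hact : ∀ z : ℚ⟮ζ⟯, z ^ (p - 1) = 1 → σ z = z ^ t := by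
      intro z hz
      obtain ⟨i, _, hi⟩ := hζK.eq_pow_of_pow_eq_one hz
      rw [← hi, map_pow, ← ht, ← pow_mul, ← pow_mul, mul_comm]
    -- σ on entries
    have hval : ∀ (m : ℕ) (x : ZMod p),
        σ ⟨(χ ^ m) x, hmem m x⟩ = ⟨(χ ^ (m * t)) x, hmem (m * t) x⟩ := by
      intro m x
      rcases eq_or_ne x 0 with rfl | hx
      · have h0 : ∀ m' : ℕ, ((⟨(χ ^ m') (0 : ZMod p), hmem m' 0⟩ : ℚ⟮ζ⟯)) = 0 := by
          intro m'
          apply Subtype.ext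
          simpa using MulChar.map_nonunit (χ ^ m') (by simpa using not_isUnit_zero)
        rw [h0, h0, map_zero]
      · have hz : (⟨(χ ^ m) x, hmem m x⟩ : ℚ⟮ζ⟯) ^ (p - 1) = 1 := by
          apply Subtype.ext
          push_cast
          rw [← map_pow, ZMod.pow_card_sub_one_eq_one hx, map_one]
        rw [hact _ hz]
        apply Subtype.ext
        push_cast
        rw [← MulChar.pow_apply' (χ ^ m) ht0 x, ← pow_mul]
    -- coprimality with n
    have hcopn : Nat.Coprime n t := (htc.coprime_dvd_right hnd).symm
    -- the permutation of indices
    have hπ0 : ∀ i : Fin (n - 1), (t * (i.1 + 1)) % n ≠ 0 := by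
      intro i h
      have h1 : n ∣ t * (i.1 + 1) := Nat.dvd_of_mod_eq_zero h
      have h2 : n ∣ i.1 + 1 := hcopn.dvd_of_dvd_mul_left h1
      have h3 := Nat.le_of_dvd (by omega) h2
      have h4 := i.2
      omega
    have hπlt : ∀ i : Fin (n - 1), (t * (i.1 + 1)) % n - 1 < n - 1 := by
      intro i
      have h1 : (t * (i.1 + 1)) % n < n := Nat.mod_lt _ (by omega)
      have h2 := hπ0 i
      omega
    set π : Fin (n - 1) → Fin (n - 1) := fun i => ⟨(t * (i.1 + 1)) % n - 1, hπlt i⟩ with hπ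
    have hπinj : Function.Injective π := by
      intro i j hij
      have h : (t * (i.1 + 1)) % n = (t * (j.1 + 1)) % n := by
        have h1 := hπ0 i
        have h2 := hπ0 j
        have h3 : (t * (i.1 + 1)) % n - 1 = (t * (j.1 + 1)) % n - 1 :=
          congrArg Fin.val hij
        omega
      have hu : IsUnit (t : ZMod n) := (ZMod.isUnit_iff_coprime t n).mpr hcopn.symm
      have hc : ((t * (i.1 + 1) : ℕ) : ZMod n) = ((t * (j.1 + 1) : ℕ) : ZMod n) :=
        (ZMod.natCast_eq_natCast_iff' _ _ _).mpr h
      push_cast at hc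
      have hc2 : ((i.1 + 1 : ℕ) : ZMod n) = ((j.1 + 1 : ℕ) : ZMod n) := by
        push_cast
        exact hu.mul_left_cancel (by exact_mod_cast hc)
      have hc3 : (i.1 + 1) % n = (j.1 + 1) % n := (ZMod.natCast_eq_natCast_iff' _ _ _).mp hc2
      have h4 := i.2
      have h5 := j.2
      rw [Nat.mod_eq_of_lt (by omega), Nat.mod_eq_of_lt (by omega)] at hc3
      exact Fin.ext (by omega)
    set e : Fin (n - 1) ≃ Fin (n - 1) :=
      Equiv.ofBijective π (Finite.injective_iff_bijective.mp hπinj) with he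
    -- character exponent identity
    have hchar : ∀ i : Fin (n - 1), χ ^ (k * (i.1 + 1) * t) = χ ^ (k * ((π i).1 + 1)) := by
      intro i
      have h1 : (π i).1 + 1 = (t * (i.1 + 1)) % n := by
        have := hπ0 i
        simp only [hπ]
        omega
      rw [h1, hpow (t * (i.1 + 1))]
      congr 1
      ring
    -- entrywise action
    have hentry : ∀ i j, σ (M i j) = M (π i) (π j) := by
      intro i j
      simp only [hM, Matrix.of_apply]
      rw [map_inv₀, map_sum]
      congr 1
      refine Finset.sum_congr rfl fun x _ => ?_
      rw [map_mul, hval, hval]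
      congr 1
      · apply Subtype.ext
        show (χ ^ (k * (i.1 + 1) * t)) x = (χ ^ (k * ((π i).1 + 1))) x
        rw [hchar i]
      · apply Subtype.ext
        show (χ ^ (k * (j.1 + 1) * t)) (1 - x) = (χ ^ (k * ((π j).1 + 1))) (1 - x)
        rw [hchar j]
    -- conclude via permutation invariance of det
    have hmap : ((σ : ℚ⟮ζ⟯ →+* ℚ⟮ζ⟯)).mapMatrix M = M.submatrix e e := by
      ext i j
      simp only [RingHom.mapMatrix_apply, Matrix.map_apply, Matrix.submatrix_apply,
        RingHom.coe_coe]
      exact congrArg _ (hentry i j)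
    calc σ M.det = (((σ : ℚ⟮ζ⟯ →+* ℚ⟮ζ⟯)).mapMatrix M).det := by
          exact RingHom.map_det (σ : ℚ⟮ζ⟯ →+* ℚ⟮ζ⟯) M
      _ = (M.submatrix e e).det := by rw [hmap]
      _ = M.det := Matrix.det_submatrix_equiv_self e M
  obtain ⟨q, hq⟩ := fixed_is_rat M.det hσdet
  refine ⟨q, ?_⟩
  rw [hq]
  have hdet := RingHom.map_det (algebraMap ℚ⟮ζ⟯ ℂ) M
  have hcoe : ((M.det : ℚ⟮ζ⟯) : ℂ) = algebraMap ℚ⟮ζ⟯ ℂ M.det := rfl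
  rw [hcoe, hdet]
  congr 1
  ext i j
  simp only [hM, RingHom.mapMatrix_apply, Matrix.map_apply, Matrix.of_apply, map_inv₀,
    map_sum, map_mul]
  rfl
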